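/- (Corollary 1, non-compliance branch.) There exists a unique k₀ ∈ ℝ satisfying the fixed-point equation k₀ = t − F(k₀)/f(k₀). Moreover, for any classifier δ with ρ(δ,φ) ≠ 0, the map r ↦ EU₀(r) attains its unique global maximum over ℝ at r₀* = k₀ / ρ(δ,φ). -/

import Mathlib

open MeasureTheory

/-- A cost distribution: a CDF `F` with continuously differentiable structure
given by a strictly positive, differentiable, log-concave density `f` with full
support on `ℝ`. -/
structure CostDist where
  F : ℝ → ℝ
  f : ℝ → ℝ
  deriv_eq : ∀ x : ℝ, HasDerivAt F (f x) x
  f_pos : ∀ x : ℝ, 0 < f x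
  f_diff : Differentiable ℝ f
  f_logConcave : ConcaveOn ℝ Set.univ fun x => Real.log (f x)
  tendsto_bot : Filter.Tendsto F Filter.atBot (nhds 0)
  tendsto_top : Filter.Tendsto F Filter.atTop (nhds 1)

/-- Expected responsiveness of the classifier `δ = (δ₁, δ₀)` at precision `φ`. -/
noncomputable def rho (d1 d0 phi : ℝ) : ℝ := (d1 + d0 - 1) * (2 * phi - 1)

/-- The designer's expected payoff `EU_D(δ | r)`. -/
noncomputable def EUD (D : CostDist) (phi A1 A0 B1 B0 r d1 d0 : ℝ) : ℝ :=
  D.F (r * rho d1 d0 phi) *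
      (phi * (A1 * d1 + A0 * (1 - d1)) + (1 - phi) * (A0 * d0 + A1 * (1 - d0))) +
    (1 - D.F (r * rho d1 d0 phi)) *
      (phi * (B1 * d0 + B0 * (1 - d0)) + (1 - phi) * (B0 * d1 + B1 * (1 - d1)))

/-- A voter's expected payoff conditional on complying, `EU₁(r | γ)`. -/
noncomputable def EU1 (D : CostDist) (phi t gamma d1 d0 r : ℝ) : ℝ :=
  -gamma + r * rho d1 d0 phi * (1 - D.F (r * rho d1 d0 phi)) + t * D.F (r * rho d1 d0 phi)

/-- A voter's expected payoff conditional on not complying, `EU₀(r)`. -/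
noncomputable def EU0 (D : CostDist) (phi t d1 d0 r : ℝ) : ℝ :=
  -(r * rho d1 d0 phi) * D.F (r * rho d1 d0 phi) + t * D.F (r * rho d1 d0 phi)

/-- A voter's overall payoff `V(r | γ) = max(EU₁(r | γ), EU₀(r))`. -/
noncomputable def V (D : CostDist) (phi t gamma d1 d0 r : ℝ) : ℝ :=
  max (EU1 D phi t gamma d1 d0 r) (EU0 D phi t d1 d0 r)

/-- Strict quasiconcavity of a real function on a set. -/
def StrictQuasiconcaveOn (s : Set ℝ) (g : ℝ → ℝ) : Prop :=
  ∀ ⦃x⦄, x ∈ s → ∀ ⦃y⦄, y ∈ s → x ≠ y → ∀ ⦃a b : ℝ⦄, 0 < a → 0 < b → a + b = 1 →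
    min (g x) (g y) < g (a * x + b * y)

/-- Strict quasiconvexity of a real function on a set. -/
def StrictQuasiconvexOn (s : Set ℝ) (g : ℝ → ℝ) : Prop :=
  ∀ ⦃x⦄, x ∈ s → ∀ ⦃y⦄, y ∈ s → x ≠ y → ∀ ⦃a b : ℝ⦄, 0 < a → 0 < b → a + b = 1 →
    g (a * x + b * y) < max (g x) (g y)

/-- `(r, δ)` is an equilibrium: `r` maximizes the median voter's payoff given `δ`,
and `δ ∈ [0,1]²` maximizes the designer's payoff given `r`. -/
def IsEquilibrium (D : CostDist) (phi t A1 A0 B1 B0 gammaMu r d1 d0 : ℝ) : Prop :=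
  d1 ∈ Set.Icc (0 : ℝ) 1 ∧ d0 ∈ Set.Icc (0 : ℝ) 1 ∧
  (∀ r' : ℝ, V D phi t gammaMu d1 d0 r' ≤ V D phi t gammaMu d1 d0 r) ∧
  (∀ e1 ∈ Set.Icc (0 : ℝ) 1, ∀ e0 ∈ Set.Icc (0 : ℝ) 1,
    EUD D phi A1 A0 B1 B0 r e1 e0 ≤ EUD D phi A1 A0 B1 B0 r d1 d0)

namespace CostDist

variable (D : CostDist)

lemma F_diff : Differentiable ℝ D.F := fun x => (D.deriv_eq x).differentiableAt

lemma F_mono : Monotone D.F :=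
  (strictMono_of_hasDerivAt_pos D.deriv_eq D.f_pos).monotone

lemma F_nonneg (x : ℝ) : 0 ≤ D.F x := by
  refine le_of_tendsto D.tendsto_bot ?_
  filter_upwards [Filter.eventually_le_atBot x] with a ha
  exact D.F_mono ha

lemma F_pos (x : ℝ) : 0 < D.F x :=
  lt_of_le_of_lt (D.F_nonneg (x - 1))
    (strictMono_of_hasDerivAt_pos D.deriv_eq D.f_pos (by linarith : x - 1 < x))

lemma logderiv_anti : AntitoneOn (deriv fun x => Real.log (D.f x)) Set.univ :=
  D.f_logConcave.antitoneOn_deriv fun x _ =>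
    (D.f_diff x).log (D.f_pos x).ne'

lemma logderiv_eq (x : ℝ) : (deriv fun y => Real.log (D.f y)) x = deriv D.f x / D.f x :=
  (((D.f_diff x).hasDerivAt).log (D.f_pos x).ne').deriv

lemma key (x : ℝ) : D.F x * deriv D.f x ≤ (D.f x) ^ 2 := by
  rcases le_or_gt (deriv D.f x) 0 with h | h
  · have : D.F x * deriv D.f x ≤ 0 := mul_nonpos_of_nonneg_of_nonpos (D.F_nonneg x) h
    nlinarith [D.f_pos x]
  · set c := deriv D.f x / D.f x with hc
    have hcpos : 0 < c := div_pos h (D.f_pos x)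
    -- G u = f u - c * F u is monotone on Iic x
    have hmono : MonotoneOn (fun u => D.f u - c * D.F u) (Set.Iic x) := by
      refine monotoneOn_of_deriv_nonneg (convex_Iic x)
        ((D.f_diff.continuous.sub (continuous_const.mul D.F_diff.continuous)).continuousOn)
        ((D.f_diff.sub ((differentiable_const c).mul D.F_diff)).differentiableOn) ?_
      intro u hu
      rw [interior_Iic] at hu
      have hder : deriv (fun u => D.f u - c * D.F u) u = deriv D.f u - c * D.f u := by
        rw [deriv_fun_sub (D.f_diff u) ((D.F_diff u).const_mul c),
          deriv_const_mul _ (D.F_diff u), (D.deriv_eq u).deriv]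
      rw [hder]
      have hle : c ≤ deriv D.f u / D.f u := by
        have := D.logderiv_anti (Set.mem_univ u) (Set.mem_univ x) hu.le
        rwa [D.logderiv_eq, D.logderiv_eq] at this
      have h1 : c * D.f u ≤ deriv D.f u := by
        have := mul_le_mul_of_nonneg_right hle (D.f_pos u).le
        rwa [div_mul_cancel₀ _ (D.f_pos u).ne'] at this
      linarith
    have hG : 0 ≤ D.f x - c * D.F x := by
      have hlim : Filter.Tendsto (fun a => -c * D.F a) Filter.atBot (nhds 0) := by
        have := D.tendsto_bot.const_mul (-c); simpa using this
      refine le_of_tendsto hlim ?_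
      filter_upwards [Filter.eventually_le_atBot x] with a ha
      have h2 := hmono (Set.mem_Iic.mpr ha) (Set.mem_Iic.mpr le_rfl) ha
      have h3 := D.f_pos a
      dsimp at h2 ⊢
      linarith
    have h4 : c * D.F x ≤ D.f x := by linarith
    rw [hc, div_mul_eq_mul_div, div_le_iff₀ (D.f_pos x)] at h4
    nlinarith [h4]

lemma ratio_mono : Monotone (fun x => D.F x / D.f x) := by
  refine monotone_of_deriv_nonneg (D.F_diff.div D.f_diff fun x => (D.f_pos x).ne') ?_
  intro x
  rw [deriv_fun_div (D.F_diff x) (D.f_diff x) (D.f_pos x).ne', (D.deriv_eq x).deriv]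
  have h1 := D.key x
  have h2 := D.f_pos x
  apply div_nonneg
  · nlinarith
  · positivity

lemma psi_anti (t : ℝ) : StrictAnti (fun k => t - k - D.F k / D.f k) := by
  intro a b hab
  have := D.ratio_mono hab.le
  dsimp at this ⊢
  linarith

lemma psi_exists_zero (t : ℝ) : ∃ k : ℝ, t - k - D.F k / D.f k = 0 := by
  set q := D.F t / D.f t with hq
  have hqpos : 0 < q := div_pos (D.F_pos t) (D.f_pos t)
  have hab : t - q - 1 ≤ t := by linarith
  have hcont : ContinuousOn (fun k => t - k - D.F k / D.f k) (Set.Icc (t - q - 1) t) :=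
    ((continuous_const.sub continuous_id).sub
      (D.F_diff.continuous.div D.f_diff.continuous fun x => (D.f_pos x).ne')).continuousOn
  have hmem : (0 : ℝ) ∈ Set.Icc (t - t - D.F t / D.f t)
      (t - (t - q - 1) - D.F (t - q - 1) / D.f (t - q - 1)) := by
    constructor
    · simp only [sub_self, zero_sub]; linarith
    · have := D.ratio_mono (by linarith : t - q - 1 ≤ t)
      dsimp at this
      linarith
  obtain ⟨k, _, hk⟩ := intermediate_value_Icc' hab hcont hmem
  exact ⟨k, hk⟩

end CostDist

/-- **Corollary 1 (non-compliance branch).** There is a unique `k₀` with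
`k₀ = t − F(k₀)/f(k₀)`, and for any non-null classifier `EU₀` attains its unique
global maximum at `r₀* = k₀ / ρ(δ,φ)`. -/
theorem cor1_noncompliance (D : CostDist) (phi t : ℝ)
    (hphi : phi ∈ Set.Ioc (1 / 2 : ℝ) 1) (ht : 0 ≤ t) :
    (∃! k : ℝ, k = t - D.F k / D.f k) ∧
    (∀ k0 : ℝ, k0 = t - D.F k0 / D.f k0 →
      ∀ d1 ∈ Set.Icc (0 : ℝ) 1, ∀ d0 ∈ Set.Icc (0 : ℝ) 1, rho d1 d0 phi ≠ 0 →
        ∀ r : ℝ, r ≠ k0 / rho d1 d0 phi →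
          EU0 D phi t d1 d0 r < EU0 D phi t d1 d0 (k0 / rho d1 d0 phi)) := by
  obtain ⟨k, hk⟩ := D.psi_exists_zero t
  constructor
  · refine ⟨k, by linarith, fun y hy => ?_⟩
    have hy' : t - y - D.F y / D.f y = 0 := by linarith
    exact (D.psi_anti t).injective (by rw [hy', hk])
  · intro k0 hk0 d1 _ d0 _ hrho r hr
    set ρ := rho d1 d0 phi with hρ
    set g : ℝ → ℝ := fun x => (t - x) * D.F x with hg
    have hEU : ∀ s : ℝ, EU0 D phi t d1 d0 s = g (s * ρ) := by
      intro s; simp only [EU0, hg, hρ]; ring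
    have hcancel : k0 / ρ * ρ = k0 := div_mul_cancel₀ _ hrho
    have hpsi0 : t - k0 - D.F k0 / D.f k0 = 0 := by linarith
    have hgder : ∀ x : ℝ, HasDerivAt g (-1 * D.F x + (t - x) * D.f x) x := fun x =>
      ((hasDerivAt_id x).const_sub t).mul (D.deriv_eq x)
    have hgcont : Continuous g := (continuous_const.sub continuous_id).mul D.F_diff.continuous
    have hdpos : ∀ x < k0, 0 < deriv g x := by
      intro x hx
      rw [(hgder x).deriv]
      have hpsix : 0 < t - x - D.F x / D.f x := by
        have := D.psi_anti t hx
        dsimp at this; linarith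
      have h1 : D.F x / D.f x * D.f x < (t - x) * D.f x :=
        mul_lt_mul_of_pos_right (by linarith) (D.f_pos x)
      rw [div_mul_cancel₀ _ (D.f_pos x).ne'] at h1
      linarith
    have hdneg : ∀ x, k0 < x → deriv g x < 0 := by
      intro x hx
      rw [(hgder x).deriv]
      have hpsix : t - x - D.F x / D.f x < 0 := by
        have := D.psi_anti t hx
        dsimp at this; linarith
      have h1 : (t - x) * D.f x < D.F x / D.f x * D.f x :=
        mul_lt_mul_of_pos_right (by linarith) (D.f_pos x)
      rw [div_mul_cancel₀ _ (D.f_pos x).ne'] at h1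
      linarith
    have hmono : StrictMonoOn g (Set.Iic k0) := by
      refine strictMonoOn_of_deriv_pos (convex_Iic k0) hgcont.continuousOn ?_
      intro x hx; rw [interior_Iic] at hx; exact hdpos x hx
    have hanti : StrictAntiOn g (Set.Ici k0) := by
      refine strictAntiOn_of_deriv_neg (convex_Ici k0) hgcont.continuousOn ?_
      intro x hx; rw [interior_Ici] at hx; exact hdneg x hx
    have hne : r * ρ ≠ k0 := by
      intro h
      exact hr ((eq_div_iff hrho).mpr h)
    rw [hEU r, hEU (k0 / ρ), hcancel]
    rcases lt_or_gt_of_ne hne with h | h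
    · exact hmono (Set.mem_Iic.mpr h.le) (Set.mem_Iic.mpr le_rfl) h
    · exact hanti (Set.mem_Ici.mpr le_rfl) (Set.mem_Ici.mpr h.le) h
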